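/- (Theorem 2.1, version for continuous approximating processes.) Fix m ∈ ℕ, vectors ν^{(1)}, …, ν^{(4)} ∈ [0,1]^m, and continuous barriers α, β ∈ C[0,1] with α(t) < β(t) for all t. Let X and X^h (h > 0) be random variables with values in C([0,1], ℝ) (equipped with the uniform metric) such that the laws of X^h converge weakly to the law of X as h → 0. Assume: (i) almost surely X(0) ∈ (α(0), β(0)); (ii) almost surely inf{ t > τ : X(t) ∉ [α(t), β(t)] } ∧ 1 = τ, where τ = π(X); (iii) g : ℝ^{4m+1} → ℝ is bounded, Borel measurable, and its set of discontinuity points N satisfies ℙ(Z ∈ N) = 0, where Z = ( Π(X, τ·ν^{(1)}), Π(X, ν^{(2)}), Π(X*, τ·ν^{(3)}), Π(X*, ν^{(4)}), τ ). Then V^h := E[ g( Π(X^h, τ^h·ν^{(1)}), Π(X^h, ν^{(2)}), Π(X^{h,*}, τ^h·ν^{(3)}), Π(X^{h,*}, ν^{(4)}), τ^h ) ] converges to V := E[ g(Z) ] as h → 0, where τ^h = π(X^h). -/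

import Mathlib

open Set MeasureTheory Filter Topology

/-- The compact time interval `[0,1]`. -/
abbrev unitI : Set ℝ := Set.Icc (0:ℝ) 1

/-- Evaluation of a continuous path `x ∈ C([0,1], ℝ)` as a function on `ℝ`
(constant outside `[0,1]`, via the projection of `ℝ` onto `[0,1]`). -/
noncomputable def ev (x : C(unitI, ℝ)) : ℝ → ℝ :=
  fun t => x (Set.projIcc (0:ℝ) 1 zero_le_one t)

/-- The running maximum `x*(t) = sup_{0 ≤ s ≤ t} x(s)`. -/
noncomputable def runMax (x : ℝ → ℝ) : ℝ → ℝ :=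
  fun t => sSup (x '' Set.Icc 0 t)

/-- The first exit time `π(x) = inf{ t ∈ [0,1] : x(t) ∉ (α(t), β(t)) } ∧ 1`
(with the convention `inf ∅ = +∞`, realized by adjoining `{1}` before taking
the infimum, since the exit set is contained in `[0,1]`). -/
noncomputable def exitTime (a b x : ℝ → ℝ) : ℝ :=
  sInf ({t ∈ Set.Icc (0:ℝ) 1 | x t ≤ a t ∨ b t ≤ x t} ∪ {1})

/-- The projection operator `Π(x, ν) = (x(ν_1), …, x(ν_m))`. -/
def proj (m : ℕ) (x : ℝ → ℝ) (ν : Fin m → ℝ) : Fin m → ℝ := fun i => x (ν i)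

/-- The random argument
`Z = ( Π(X, τ·ν¹), Π(X, ν²), Π(X*, τ·ν³), Π(X*, ν⁴), τ )`, `τ = π(X)`. -/
noncomputable def argZ (m : ℕ) (a b : ℝ → ℝ) (ν1 ν2 ν3 ν4 : Fin m → ℝ)
    (x : ℝ → ℝ) :
    (Fin m → ℝ) × (Fin m → ℝ) × (Fin m → ℝ) × (Fin m → ℝ) × ℝ :=
  (proj m x (fun i => exitTime a b x * ν1 i), proj m x ν2,
    proj m (runMax x) (fun i => exitTime a b x * ν3 i), proj m (runMax x) ν4,
    exitTime a b x)

set_option linter.unusedSectionVars false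
set_option linter.unusedVariables false


noncomputable section

variable {E : Type*} [MeasurableSpace E] [MetricSpace E] [BorelSpace E]

/-- Upper envelope of a function. -/
noncomputable def uEnv (φ : E → ℝ) : E → ℝ :=
  fun x => sInf ((fun δ => sSup (φ '' Metric.ball x δ)) '' Ioi (0:ℝ))

variable {φ : E → ℝ} {M : ℝ}

lemma uEnv_facts (hb : ∀ z, |φ z| ≤ M) :
    (∀ x, φ x ≤ uEnv φ x) ∧ (∀ x, |uEnv φ x| ≤ M) := by
  have hub : ∀ z, φ z ≤ M := fun z => (abs_le.1 (hb z)).2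
  have hlb : ∀ z, -M ≤ φ z := fun z => (abs_le.1 (hb z)).1
  have hne : ∀ x (δ : ℝ), 0 < δ → (φ '' Metric.ball x δ).Nonempty :=
    fun x δ hδ => ⟨φ x, mem_image_of_mem _ (Metric.mem_ball_self hδ)⟩
  have hba : ∀ x (δ : ℝ), BddAbove (φ '' Metric.ball x δ) :=
    fun x δ => ⟨M, fun v ⟨z, _, hz⟩ => hz ▸ hub z⟩
  have hφle : ∀ x (δ : ℝ), 0 < δ → φ x ≤ sSup (φ '' Metric.ball x δ) :=
    fun x δ hδ => le_csSup (hba x δ) (mem_image_of_mem _ (Metric.mem_ball_self hδ))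
  have h1 : ∀ x, φ x ≤ uEnv φ x := by
    intro x
    have hne' : ((fun δ => sSup (φ '' Metric.ball x δ)) '' Ioi (0:ℝ)).Nonempty :=
      ⟨_, mem_image_of_mem _ (mem_Ioi.2 one_pos)⟩
    apply le_csInf hne'
    rintro v ⟨δ, hδ, rfl⟩
    exact hφle x δ (mem_Ioi.1 hδ)
  refine ⟨h1, fun x => abs_le.2 ⟨le_trans (hlb x) (h1 x), ?_⟩⟩
  have : sSup (φ '' Metric.ball x 1) ≤ M :=
    csSup_le (hne x 1 one_pos) (fun v ⟨z, _, hz⟩ => hz ▸ hub z)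
  have hbb : BddBelow ((fun δ => sSup (φ '' Metric.ball x δ)) '' Ioi (0:ℝ)) := by
    refine ⟨-M, ?_⟩
    rintro v ⟨δ, hδ, rfl⟩
    exact le_trans (hlb x) (hφle x δ (mem_Ioi.1 hδ))
  exact csInf_le_of_le hbb (mem_image_of_mem _ (mem_Ioi.2 one_pos)) this

lemma uEnv_lt_open (hb : ∀ z, |φ z| ≤ M) (c : ℝ) : IsOpen {x | uEnv φ x < c} := by
  have hub : ∀ z, φ z ≤ M := fun z => (abs_le.1 (hb z)).2
  have hlb : ∀ z, -M ≤ φ z := fun z => (abs_le.1 (hb z)).1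
  have hne : ∀ x (δ : ℝ), 0 < δ → (φ '' Metric.ball x δ).Nonempty :=
    fun x δ hδ => ⟨φ x, mem_image_of_mem _ (Metric.mem_ball_self hδ)⟩
  have hba : ∀ x (δ : ℝ), BddAbove (φ '' Metric.ball x δ) :=
    fun x δ => ⟨M, fun v ⟨z, _, hz⟩ => hz ▸ hub z⟩
  have hbb : ∀ x, BddBelow ((fun δ => sSup (φ '' Metric.ball x δ)) '' Ioi (0:ℝ)) := by
    intro x
    refine ⟨-M, ?_⟩
    rintro v ⟨δ, hδ, rfl⟩
    exact le_trans (hlb x) (le_csSup (hba x δ) (mem_image_of_mem _ (Metric.mem_ball_self hδ)))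
  rw [isOpen_iff_mem_nhds]
  intro x hx
  have hxne : ((fun δ => sSup (φ '' Metric.ball x δ)) '' Ioi (0:ℝ)).Nonempty :=
    ⟨_, mem_image_of_mem _ (mem_Ioi.2 one_pos)⟩
  obtain ⟨v, ⟨δ, hδ, rfl⟩, hvc⟩ := (csInf_lt_iff (hbb x) hxne).1 hx
  rw [mem_Ioi] at hδ
  have : Metric.ball x (δ/2) ⊆ {x | uEnv φ x < c} := by
    intro y hy
    have hsub : Metric.ball y (δ/2) ⊆ Metric.ball x δ := by
      intro z hz
      rw [Metric.mem_ball] at *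
      calc dist z x ≤ dist z y + dist y x := dist_triangle _ _ _
        _ < δ/2 + δ/2 := add_lt_add hz hy
        _ = δ := by ring
    have h1 : sSup (φ '' Metric.ball y (δ/2)) ≤ sSup (φ '' Metric.ball x δ) :=
      csSup_le_csSup (hba x δ) (hne y (δ/2) (by linarith)) (image_mono hsub)
    exact lt_of_le_of_lt
      (csInf_le (hbb y) (mem_image_of_mem _ (mem_Ioi.2 (by linarith : (0:ℝ) < δ/2))))
      (lt_of_le_of_lt h1 hvc)
  exact Filter.mem_of_superset (Metric.ball_mem_nhds x (by linarith)) this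

lemma uEnv_measurable (hb : ∀ z, |φ z| ≤ M) : Measurable (uEnv φ) := by
  apply measurable_of_Iio
  intro c
  exact (uEnv_lt_open hb c).measurableSet

lemma uEnv_eq_of_continuousAt (hb : ∀ z, |φ z| ≤ M) {x : E} (hc : ContinuousAt φ x) :
    uEnv φ x = φ x := by
  refine le_antisymm ?_ ((uEnv_facts hb).1 x)
  refine le_of_forall_pos_le_add (fun ε hε => ?_)
  obtain ⟨δ, hδ, hball⟩ := Metric.continuousAt_iff.1 hc ε hε
  have hsup : sSup (φ '' Metric.ball x δ) ≤ φ x + ε := by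
    apply csSup_le ⟨φ x, mem_image_of_mem _ (Metric.mem_ball_self hδ)⟩
    rintro v ⟨z, hz, rfl⟩
    have := hball hz
    rw [Real.dist_eq] at this
    linarith [abs_le.1 this.le]
  have hbb : BddBelow ((fun δ => sSup (φ '' Metric.ball x δ)) '' Ioi (0:ℝ)) := by
    refine ⟨-M, ?_⟩
    rintro v ⟨δ', hδ', rfl⟩
    exact le_trans ((abs_le.1 (hb x)).1)
      (le_csSup ⟨M, fun v ⟨z, _, hz⟩ => hz ▸ (abs_le.1 (hb z)).2⟩
        (mem_image_of_mem _ (Metric.mem_ball_self hδ')))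
  exact csInf_le_of_le hbb (mem_image_of_mem _ (mem_Ioi.2 hδ)) hsup

end

section Mapping

open ENNReal

variable {E : Type*} [MeasurableSpace E] [MetricSpace E] [BorelSpace E] {φ : E → ℝ} {M : ℝ}

lemma bdd_meas_integrable {P : Measure E} [IsFiniteMeasure P] {f : E → ℝ} {M : ℝ}
    (hm : Measurable f) (hb : ∀ x, |f x| ≤ M) : Integrable f P :=
  (integrable_const M).mono' hm.aestronglyMeasurable
    (Filter.Eventually.of_forall (fun x => by simpa [Real.norm_eq_abs] using hb x))

lemma env_integral_eventually_lt
    (μ : ProbabilityMeasure E) (μs : ℕ → ProbabilityMeasure E)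
    (hμs : Tendsto μs atTop (𝓝 μ))
    (hm : Measurable φ) (hb : ∀ z, |φ z| ≤ M) {ε : ℝ} (hε : 0 < ε) :
    ∀ᶠ n in atTop, ∫ x, uEnv φ x ∂(μs n : Measure E)
      < (∫ x, uEnv φ x ∂(μ : Measure E)) + ε := by
  have hb' : ∀ z, |φ z| ≤ |M| := fun z => (hb z).trans (le_abs_self M)
  set u := uEnv φ with hu
  have hum : Measurable u := uEnv_measurable hb'
  have hub : ∀ x, |u x| ≤ |M| := (uEnv_facts hb').2
  set v : E → ℝ := fun x => u x + |M| with hv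
  have hvm : Measurable v := hum.add measurable_const
  have hv_nn : ∀ x, 0 ≤ v x := fun x => by
    have := (abs_le.1 (hub x)).1; simp only [hv]; linarith
  have hv_le : ∀ x, v x ≤ 2 * |M| := fun x => by
    have := (abs_le.1 (hub x)).2; simp only [hv]; linarith
  -- the upper level sets are closed
  have hclosed : ∀ t : ℝ, IsClosed {x | t ≤ v x} := by
    intro t
    have : {x | t ≤ v x} = {x | u x < t - |M|}ᶜ := by
      ext x; simp only [mem_setOf_eq, mem_compl_iff, not_lt, hv]; constructor <;> intro h <;> linarith
    rw [this]
    exact (uEnv_lt_open hb' _).isClosed_compl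
  -- lintegrals
  set A : ℕ → ℝ≥0∞ := fun n => ∫⁻ x, ENNReal.ofReal (v x) ∂(μs n : Measure E) with hA
  set B : ℝ≥0∞ := ∫⁻ x, ENNReal.ofReal (v x) ∂(μ : Measure E) with hB
  have hBne : B ≠ ∞ := by
    have : B ≤ ENNReal.ofReal (2 * |M|) := by
      calc B ≤ ∫⁻ _, ENNReal.ofReal (2 * |M|) ∂(μ : Measure E) :=
            lintegral_mono (fun x => ENNReal.ofReal_le_ofReal (hv_le x))
        _ = ENNReal.ofReal (2 * |M|) := by simp
    exact ne_top_of_le_ne_top ENNReal.ofReal_ne_top this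
  have hAne : ∀ n, A n ≠ ∞ := by
    intro n
    have : A n ≤ ENNReal.ofReal (2 * |M|) := by
      calc A n ≤ ∫⁻ _, ENNReal.ofReal (2 * |M|) ∂(μs n : Measure E) :=
            lintegral_mono (fun x => ENNReal.ofReal_le_ofReal (hv_le x))
        _ = ENNReal.ofReal (2 * |M|) := by simp
    exact ne_top_of_le_ne_top ENNReal.ofReal_ne_top this
  -- layer cake and reverse Fatou
  have key : Filter.limsup A atTop ≤ B := by
    have hlayer : ∀ (P : Measure E), IsProbabilityMeasure P →
        ∫⁻ x, ENNReal.ofReal (v x) ∂P = ∫⁻ t in Ioi (0:ℝ), P {x | t ≤ v x} := by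
      intro P _
      exact lintegral_eq_lintegral_meas_le P (Filter.Eventually.of_forall hv_nn)
        hvm.aemeasurable
    have hmono : ∀ n, Antitone (fun t : ℝ => (μs n : Measure E) {x | t ≤ v x}) := by
      intro n s t hst
      exact measure_mono (fun x hx => le_trans hst hx)
    calc Filter.limsup A atTop
        = Filter.limsup (fun n => ∫⁻ t in Ioi (0:ℝ), (μs n : Measure E) {x | t ≤ v x}) atTop := by
          simp only [hA]
          congr 1
          ext n
          exact hlayer _ inferInstance
      _ ≤ ∫⁻ t in Ioi (0:ℝ),
            Filter.limsup (fun n => (μs n : Measure E) {x | t ≤ v x}) atTop := by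
          apply limsup_lintegral_le (μ := (volume : Measure ℝ).restrict (Ioi 0))
            (Set.indicator (Iic (2 * |M|)) (fun _ => (1:ℝ≥0∞)))
          · intro n
            exact ((hmono n).measurable)
          · intro n
            apply Filter.Eventually.of_forall
            intro t
            by_cases ht : t ≤ 2 * |M|
            · rw [Set.indicator_of_mem (mem_Iic.2 ht)]
              exact prob_le_one
            · rw [Set.indicator_of_notMem (by simpa using ht)]
              have : {x | t ≤ v x} = (∅ : Set E) := by
                ext x
                simp only [mem_setOf_eq, mem_empty_iff_false, iff_false, not_le]
                exact lt_of_le_of_lt (hv_le x) (lt_of_not_ge ht)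
              simp [this]
          · rw [lintegral_indicator measurableSet_Iic]
            simp only [lintegral_const, Measure.restrict_restrict measurableSet_Iic]
            have : ((volume : Measure ℝ)) (Iic (2 * |M|) ∩ Ioi 0) ≤ ENNReal.ofReal (2 * |M|) := by
              have hsub : Iic (2 * |M|) ∩ Ioi 0 ⊆ Ioc 0 (2 * |M|) := by
                rintro t ⟨h1, h2⟩; exact ⟨h2, h1⟩
              calc ((volume : Measure ℝ)) (Iic (2 * |M|) ∩ Ioi 0)
                  ≤ volume (Ioc 0 (2 * |M|)) := measure_mono hsub
                _ = ENNReal.ofReal (2 * |M| - 0) := by rw [Real.volume_Ioc]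
                _ = ENNReal.ofReal (2 * |M|) := by norm_num
            exact ne_top_of_le_ne_top (ENNReal.mul_ne_top ENNReal.ofNat_ne_top ENNReal.ofReal_ne_top : 2 * ENNReal.ofReal |M| ≠ ⊤) (by simpa using this)
      _ ≤ ∫⁻ t in Ioi (0:ℝ), (μ : Measure E) {x | t ≤ v x} := by
          apply lintegral_mono
          intro t
          exact ProbabilityMeasure.limsup_measure_closed_le_of_tendsto hμs (hclosed t)
      _ = B := (hlayer _ inferInstance).symm
  -- from limsup bound to eventual bound
  have hevent : ∀ᶠ n in atTop, A n < B + ENNReal.ofReal ε := by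
    apply Filter.eventually_lt_of_limsup_lt
      (lt_of_le_of_lt key (ENNReal.lt_add_right hBne (ENNReal.ofReal_pos.2 hε).ne'))
  -- translate back to Bochner integrals
  have hint : ∀ (P : Measure E), IsProbabilityMeasure P →
      ∫ x, v x ∂P = (∫⁻ x, ENNReal.ofReal (v x) ∂P).toReal := by
    intro P _
    exact integral_eq_lintegral_of_nonneg_ae (Filter.Eventually.of_forall hv_nn)
      hvm.aestronglyMeasurable
  have hiu : ∀ (P : Measure E), IsProbabilityMeasure P →
      ∫ x, v x ∂P = (∫ x, u x ∂P) + |M| := by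
    intro P _
    rw [integral_add (bdd_meas_integrable hum hub) (integrable_const _), integral_const]
    simp
  filter_upwards [hevent] with n hn
  have h1 : (A n).toReal < (B + ENNReal.ofReal ε).toReal := by
    apply (ENNReal.toReal_lt_toReal (hAne n) _).2 hn
    exact ENNReal.add_ne_top.2 ⟨hBne, ENNReal.ofReal_ne_top⟩
  rw [ENNReal.toReal_add hBne ENNReal.ofReal_ne_top, ENNReal.toReal_ofReal hε.le] at h1
  have h2 : ∫ x, v x ∂(μs n : Measure E) < (∫ x, v x ∂(μ : Measure E)) + ε := by
    rw [hint _ inferInstance, hint _ inferInstance]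
    exact h1
  rw [hiu _ inferInstance, hiu _ inferInstance] at h2
  linarith

end Mapping

section Mapping2

variable {E : Type*} [MeasurableSpace E] [MetricSpace E] [BorelSpace E] {φ : E → ℝ} {M : ℝ}

/-- Sequential mapping theorem: weak convergence implies convergence of integrals of bounded
measurable a.e.-continuous functions. -/
lemma seq_mapping (μ : ProbabilityMeasure E) (μs : ℕ → ProbabilityMeasure E)
    (hweak : ∀ F : E → ℝ, Continuous F → (∃ M : ℝ, ∀ z, |F z| ≤ M) →
      Tendsto (fun n => ∫ x, F x ∂(μs n : Measure E)) atTop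
        (𝓝 (∫ x, F x ∂(μ : Measure E))))
    (hm : Measurable φ) (hb : ∀ z, |φ z| ≤ M)
    (hc1 : ∫ x, uEnv φ x ∂(μ : Measure E) = ∫ x, φ x ∂(μ : Measure E))
    (hc2 : ∫ x, uEnv (fun x => -φ x) x ∂(μ : Measure E)
      = ∫ x, (fun x => -φ x) x ∂(μ : Measure E)) :
    Tendsto (fun n => ∫ x, φ x ∂(μs n : Measure E)) atTop
      (𝓝 (∫ x, φ x ∂(μ : Measure E))) := by
  have hμs : Tendsto μs atTop (𝓝 μ) := by
    rw [ProbabilityMeasure.tendsto_iff_forall_integral_tendsto]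
    intro f
    exact hweak f f.continuous ⟨‖f‖, fun z => by
      simpa [Real.norm_eq_abs] using f.norm_coe_le_norm z⟩
  -- one-sided bound, for a general bounded measurable a.e.-continuous function
  have onesided : ∀ (ψ : E → ℝ), Measurable ψ → (∀ z, |ψ z| ≤ M) →
      (∫ x, uEnv ψ x ∂(μ : Measure E) = ∫ x, ψ x ∂(μ : Measure E)) → ∀ ε : ℝ, 0 < ε →
      ∀ᶠ n in atTop, ∫ x, ψ x ∂(μs n : Measure E) < (∫ x, ψ x ∂(μ : Measure E)) + ε := by
    intro ψ hψm hψb hcongr ε hε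
    have hb' : ∀ z, |ψ z| ≤ |M| := fun z => (hψb z).trans (le_abs_self M)
    have henv := env_integral_eventually_lt (φ := ψ) (M := M) μ μs hμs hψm hψb hε
    filter_upwards [henv] with n hn
    have hmono : ∫ x, ψ x ∂(μs n : Measure E) ≤ ∫ x, uEnv ψ x ∂(μs n : Measure E) :=
      integral_mono (bdd_meas_integrable hψm hb')
        (bdd_meas_integrable (uEnv_measurable hb') (uEnv_facts hb').2) (uEnv_facts hb').1
    calc ∫ x, ψ x ∂(μs n : Measure E) ≤ ∫ x, uEnv ψ x ∂(μs n : Measure E) := hmono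
      _ < (∫ x, uEnv ψ x ∂(μ : Measure E)) + ε := hn
      _ = (∫ x, ψ x ∂(μ : Measure E)) + ε := by rw [hcongr]
  rw [Metric.tendsto_atTop]
  intro ε hε
  have h1 := onesided φ hm hb hc1 ε hε
  have h2 := onesided (fun x => -φ x) hm.neg (fun z => by simpa using hb z) hc2 ε hε
  have h2' : ∀ᶠ n in atTop,
      (∫ x, φ x ∂(μ : Measure E)) - ε < ∫ x, φ x ∂(μs n : Measure E) := by
    filter_upwards [h2] with n hn
    rw [integral_neg, integral_neg] at hn
    linarith
  obtain ⟨N, hN⟩ := Filter.eventually_atTop.1 (h1.and h2')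
  exact ⟨N, fun n hn => by
    have := hN n hn
    rw [Real.dist_eq, abs_sub_lt_iff]
    constructor <;> linarith [this.1, this.2]⟩

end Mapping2
section ExitTime

variable {a b : ℝ → ℝ}

lemma ev_continuous (y : C(unitI, ℝ)) : Continuous (ev y) :=
  y.continuous.comp continuous_projIcc

lemma ev_dist_le (y z : C(unitI, ℝ)) (t : ℝ) : |ev y t - ev z t| ≤ dist y z := by
  rw [← Real.dist_eq]
  exact ContinuousMap.dist_apply_le_dist _

/-- The exit set together with `{1}`. -/
def exitSet (a b : ℝ → ℝ) (x : ℝ → ℝ) : Set ℝ :=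
  {t ∈ Set.Icc (0:ℝ) 1 | x t ≤ a t ∨ b t ≤ x t} ∪ {1}

lemma exitTime_eq (x : ℝ → ℝ) : exitTime a b x = sInf (exitSet a b x) := rfl

lemma exitSet_nonempty (x : ℝ → ℝ) : (exitSet a b x).Nonempty :=
  ⟨1, Or.inr rfl⟩

lemma exitSet_subset (x : ℝ → ℝ) : exitSet a b x ⊆ Set.Icc (0:ℝ) 1 := by
  rintro t (⟨ht, _⟩ | ht)
  · exact ht
  · rw [mem_singleton_iff] at ht
    rw [ht]; exact ⟨zero_le_one, le_refl 1⟩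

lemma exitSet_bddBelow (x : ℝ → ℝ) : BddBelow (exitSet a b x) :=
  ⟨0, fun t ht => (exitSet_subset x ht).1⟩

lemma exitTime_mem_Icc (x : ℝ → ℝ) : exitTime a b x ∈ Set.Icc (0:ℝ) 1 := by
  constructor
  · exact le_csInf (exitSet_nonempty x) (fun t ht => (exitSet_subset x ht).1)
  · exact csInf_le (exitSet_bddBelow x) (Or.inr rfl)

lemma not_exit_of_lt_exitTime {x : ℝ → ℝ} {t : ℝ} (ht : t ∈ Set.Icc (0:ℝ) 1)
    (hlt : t < exitTime a b x) : a t < x t ∧ x t < b t := by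
  by_contra hcon
  have : t ∈ exitSet a b x := by
    left
    refine ⟨ht, ?_⟩
    push_neg at hcon
    rcases le_or_gt (x t) (a t) with h | h
    · exact Or.inl h
    · exact Or.inr (hcon h)
  exact absurd (csInf_le (exitSet_bddBelow x) this) (not_le.2 hlt)

/-- A path strictly inside the barriers on `[0, c]` keeps this property under a small
uniform perturbation (with a uniform margin). -/
lemma margin_lemma (ha : ContinuousOn a (Set.Icc 0 1)) (hb : ContinuousOn b (Set.Icc 0 1))
    {c : ℝ} (hc : c ∈ Set.Icc (0:ℝ) 1) (y : C(unitI, ℝ))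
    (h : ∀ t ∈ Set.Icc (0:ℝ) c, a t < ev y t ∧ ev y t < b t) :
    ∃ δ > 0, ∀ z : C(unitI, ℝ), dist z y ≤ δ →
      ∀ t ∈ Set.Icc (0:ℝ) c, a t < ev z t ∧ ev z t < b t := by
  have hsub : Set.Icc (0:ℝ) c ⊆ Set.Icc (0:ℝ) 1 := Icc_subset_Icc le_rfl hc.2
  set f : ℝ → ℝ := fun t => min (ev y t - a t) (b t - ev y t) with hf
  have hfc : ContinuousOn f (Set.Icc (0:ℝ) c) :=
    (((ev_continuous y).continuousOn).sub (ha.mono hsub)).inf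
      ((hb.mono hsub).sub ((ev_continuous y).continuousOn))
  obtain ⟨t₀, ht₀, hmin⟩ := isCompact_Icc.exists_isMinOn ⟨0, left_mem_Icc.2 hc.1⟩ hfc
  have hpos : 0 < f t₀ := by
    obtain ⟨h1, h2⟩ := h t₀ ht₀
    exact lt_min (by linarith) (by linarith)
  refine ⟨f t₀ / 2, by linarith, fun z hz t ht => ?_⟩
  have h1 := ev_dist_le z y t
  have h2 : f t₀ ≤ f t := hmin ht
  have h3 : f t ≤ ev y t - a t := min_le_left _ _
  have h4 : f t ≤ b t - ev y t := min_le_right _ _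
  have := abs_le.1 h1
  constructor <;> nlinarith

end ExitTime

section ExitTime2

variable {a b : ℝ → ℝ}

lemma exitSet_isClosed (ha : ContinuousOn a (Set.Icc 0 1)) (hb : ContinuousOn b (Set.Icc 0 1))
    (y : C(unitI, ℝ)) : IsClosed (exitSet a b (ev y)) := by
  have hE : {t ∈ Set.Icc (0:ℝ) 1 | ev y t ≤ a t ∨ b t ≤ ev y t}
      = (Set.Icc (0:ℝ) 1 ∩ (fun t => ev y t - a t) ⁻¹' Set.Iic 0)
        ∪ (Set.Icc (0:ℝ) 1 ∩ (fun t => b t - ev y t) ⁻¹' Set.Iic 0) := by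
    ext t
    simp only [mem_setOf_eq, mem_union, mem_inter_iff, mem_preimage, mem_Iic, sub_nonpos]
    tauto
  have h1 : IsClosed (Set.Icc (0:ℝ) 1 ∩ (fun t => ev y t - a t) ⁻¹' Set.Iic 0) :=
    (((ev_continuous y).continuousOn).sub ha).preimage_isClosed_of_isClosed
      isClosed_Icc isClosed_Iic
  have h2 : IsClosed (Set.Icc (0:ℝ) 1 ∩ (fun t => b t - ev y t) ⁻¹' Set.Iic 0) :=
    (hb.sub ((ev_continuous y).continuousOn)).preimage_isClosed_of_isClosed
      isClosed_Icc isClosed_Iic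
  unfold exitSet
  rw [hE]
  exact ((h1.union h2).union isClosed_singleton)

lemma exitTime_mem_exitSet (ha : ContinuousOn a (Set.Icc 0 1))
    (hb : ContinuousOn b (Set.Icc 0 1)) (y : C(unitI, ℝ)) :
    exitTime a b (ev y) ∈ exitSet a b (ev y) :=
  (exitSet_isClosed ha hb y).csInf_mem (exitSet_nonempty _) (exitSet_bddBelow _)

lemma exitTime_measurable [MeasurableSpace C(unitI, ℝ)] [BorelSpace C(unitI, ℝ)]
    (ha : ContinuousOn a (Set.Icc 0 1)) (hb : ContinuousOn b (Set.Icc 0 1)) :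
    Measurable (fun y : C(unitI, ℝ) => exitTime a b (ev y)) := by
  apply measurable_of_Iic
  intro c
  rcases le_or_gt 1 c with hc | hc
  · have : (fun y : C(unitI, ℝ) => exitTime a b (ev y)) ⁻¹' Set.Iic c = univ := by
      ext y
      simp only [mem_preimage, mem_Iic, mem_univ, iff_true]
      exact le_trans (exitTime_mem_Icc (ev y)).2 hc
    rw [this]; exact MeasurableSet.univ
  rcases lt_or_ge c 0 with hc0 | hc0
  · have : (fun y : C(unitI, ℝ) => exitTime a b (ev y)) ⁻¹' Set.Iic c = ∅ := by
      ext y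
      simp only [mem_preimage, mem_Iic, mem_empty_iff_false, iff_false, not_le]
      exact lt_of_lt_of_le hc0 (exitTime_mem_Icc (ev y)).1
    rw [this]; exact MeasurableSet.empty
  -- main case : 0 ≤ c < 1
  have hkey : (fun y : C(unitI, ℝ) => exitTime a b (ev y)) ⁻¹' Set.Iic c
      = {y : C(unitI, ℝ) | ∃ t ∈ Set.Icc (0:ℝ) c, ev y t ≤ a t ∨ b t ≤ ev y t} := by
    ext y
    simp only [mem_preimage, mem_Iic, mem_setOf_eq]
    constructor
    · intro hle
      have hmem := exitTime_mem_exitSet ha hb y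
      rcases hmem with ⟨hIcc, hexit⟩ | h1
    -- τ lies in the exit part
      · exact ⟨exitTime a b (ev y), ⟨hIcc.1, hle⟩, hexit⟩
      · rw [mem_singleton_iff] at h1
        exact absurd (h1 ▸ hle) (not_le.2 hc)
    · rintro ⟨t, ⟨ht0, htc⟩, hexit⟩
      have : t ∈ exitSet a b (ev y) := Or.inl ⟨⟨ht0, le_trans htc hc.le⟩, hexit⟩
      exact le_trans (csInf_le (exitSet_bddBelow _) this) htc
  rw [hkey]
  have hopen : IsOpen {y : C(unitI, ℝ) | ∀ t ∈ Set.Icc (0:ℝ) c, a t < ev y t ∧ ev y t < b t} := by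
    rw [isOpen_iff_mem_nhds]
    intro y hy
    obtain ⟨δ, hδ, hball⟩ := margin_lemma ha hb ⟨hc0, hc.le⟩ y hy
    exact Filter.mem_of_superset (Metric.ball_mem_nhds y hδ)
      (fun z hz => hball z (le_of_lt (by rwa [Metric.mem_ball] at hz)))
  have hcompl : {y : C(unitI, ℝ) | ∃ t ∈ Set.Icc (0:ℝ) c, ev y t ≤ a t ∨ b t ≤ ev y t}
      = {y : C(unitI, ℝ) | ∀ t ∈ Set.Icc (0:ℝ) c, a t < ev y t ∧ ev y t < b t}ᶜ := by
    ext y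
    simp only [mem_setOf_eq, mem_compl_iff, not_forall]
    constructor
    · rintro ⟨t, ht, hexit⟩
      refine ⟨t, ht, ?_⟩
      rintro ⟨h1, h2⟩
      rcases hexit with h | h <;> linarith
    · rintro ⟨t, ht, hni⟩
      refine ⟨t, ht, ?_⟩
      by_contra hcon
      push_neg at hcon
      exact hni ⟨hcon.1, hcon.2⟩
  rw [hcompl]
  exact hopen.isClosed_compl.measurableSet

end ExitTime2

section ExitTime3

variable {a b : ℝ → ℝ}

lemma exitTime_upper (x₀ : C(unitI, ℝ))
    (hreg : sInf ({t | exitTime a b (ev x₀) < t ∧ t ≤ 1 ∧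
        (ev x₀ t < a t ∨ b t < ev x₀ t)} ∪ {1}) = exitTime a b (ev x₀))
    {ε : ℝ} (hε : 0 < ε) :
    ∃ δ > 0, ∀ z : C(unitI, ℝ), dist z x₀ ≤ δ →
      exitTime a b (ev z) ≤ exitTime a b (ev x₀) + ε := by
  set τ₀ := exitTime a b (ev x₀) with hτ₀
  rcases eq_or_lt_of_le (exitTime_mem_Icc (a := a) (b := b) (ev x₀)).2 with h1 | h1
  · refine ⟨1, one_pos, fun z _ => ?_⟩
    have := (exitTime_mem_Icc (a := a) (b := b) (ev z)).2
    rw [← hτ₀] at h1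
    linarith
  -- τ₀ < 1
  set T := {t | τ₀ < t ∧ t ≤ 1 ∧ (ev x₀ t < a t ∨ b t < ev x₀ t)} with hT
  have hTbdd : BddBelow (T ∪ {1}) := by
    refine ⟨0, ?_⟩
    rintro t (⟨ht1, _, _⟩ | ht)
    · exact le_trans (exitTime_mem_Icc (ev x₀)).1 ht1.le
    · rw [mem_singleton_iff] at ht; rw [ht]; exact zero_le_one
  have hTne : (T ∪ {1}).Nonempty := ⟨1, Or.inr rfl⟩
  have hlt : sInf (T ∪ {1}) < min (τ₀ + ε) 1 := by
    rw [hreg]; exact lt_min (by linarith) h1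
  obtain ⟨t, htmem, htlt⟩ := (csInf_lt_iff hTbdd hTne).1 hlt
  have htT : t ∈ T := by
    rcases htmem with h | h
    · exact h
    · rw [mem_singleton_iff] at h
      exact absurd (h ▸ htlt) (not_lt.2 (min_le_right _ _))
  obtain ⟨ht1, ht2, hexit⟩ := htT
  have htIcc : t ∈ Set.Icc (0:ℝ) 1 := ⟨le_trans (exitTime_mem_Icc (ev x₀)).1 ht1.le, ht2⟩
  -- choose margin δ depending on which barrier is strictly crossed
  have : ∃ δ > 0, ∀ z : C(unitI, ℝ), dist z x₀ ≤ δ → (ev z t ≤ a t ∨ b t ≤ ev z t) := by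
    rcases hexit with h | h
    · refine ⟨(a t - ev x₀ t) / 2, by linarith, fun z hz => Or.inl ?_⟩
      have := abs_le.1 (ev_dist_le z x₀ t)
      linarith [this.2]
    · refine ⟨(ev x₀ t - b t) / 2, by linarith, fun z hz => Or.inr ?_⟩
      have := abs_le.1 (ev_dist_le z x₀ t)
      linarith [this.1]
  obtain ⟨δ, hδ, hball⟩ := this
  refine ⟨δ, hδ, fun z hz => ?_⟩
  have : t ∈ exitSet a b (ev z) := Or.inl ⟨htIcc, hball z hz⟩
  calc exitTime a b (ev z) ≤ t := csInf_le (exitSet_bddBelow _) this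
    _ ≤ min (τ₀ + ε) 1 := htlt.le
    _ ≤ τ₀ + ε := min_le_left _ _

lemma exitTime_lower (ha : ContinuousOn a (Set.Icc 0 1)) (hb : ContinuousOn b (Set.Icc 0 1))
    (x₀ : C(unitI, ℝ)) {ε : ℝ} (hε : 0 < ε) :
    ∃ δ > 0, ∀ z : C(unitI, ℝ), dist z x₀ ≤ δ →
      exitTime a b (ev x₀) - ε ≤ exitTime a b (ev z) := by
  set τ₀ := exitTime a b (ev x₀) with hτ₀
  rcases lt_or_ge τ₀ ε with h | h
  · exact ⟨1, one_pos, fun z _ => le_trans (by linarith) (exitTime_mem_Icc (ev z)).1⟩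
  set c := τ₀ - ε with hc
  have hτIcc := exitTime_mem_Icc (a := a) (b := b) (ev x₀)
  have hcIcc : c ∈ Set.Icc (0:ℝ) 1 := ⟨by linarith [hτIcc.1], by linarith [hτIcc.2]⟩
  have hinside : ∀ t ∈ Set.Icc (0:ℝ) c, a t < ev x₀ t ∧ ev x₀ t < b t := by
    intro t ht
    apply not_exit_of_lt_exitTime ⟨ht.1, le_trans ht.2 hcIcc.2⟩
    calc t ≤ c := ht.2
      _ < τ₀ := by rw [hc]; linarith
  obtain ⟨δ, hδ, hball⟩ := margin_lemma ha hb hcIcc x₀ hinside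
  refine ⟨δ, hδ, fun z hz => ?_⟩
  have hz' := hball z hz
  apply le_csInf (exitSet_nonempty _)
  rintro s (⟨hsIcc, hsexit⟩ | hs1)
  · by_contra hcon
    push_neg at hcon
    have hsc : s ∈ Set.Icc (0:ℝ) c := ⟨hsIcc.1, hcon.le⟩
    obtain ⟨h1', h2'⟩ := hz' s hsc
    rcases hsexit with h' | h' <;> linarith
  · rw [mem_singleton_iff] at hs1
    rw [hs1]
    linarith [hcIcc.2]

lemma exitTime_continuousAt (ha : ContinuousOn a (Set.Icc 0 1))
    (hb : ContinuousOn b (Set.Icc 0 1)) (x₀ : C(unitI, ℝ))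
    (hreg : sInf ({t | exitTime a b (ev x₀) < t ∧ t ≤ 1 ∧
        (ev x₀ t < a t ∨ b t < ev x₀ t)} ∪ {1}) = exitTime a b (ev x₀)) :
    ContinuousAt (fun y : C(unitI, ℝ) => exitTime a b (ev y)) x₀ := by
  rw [Metric.continuousAt_iff]
  intro ε hε
  obtain ⟨δ₁, hδ₁, h1⟩ := exitTime_upper (a := a) (b := b) x₀ hreg (half_pos hε)
  obtain ⟨δ₂, hδ₂, h2⟩ := exitTime_lower ha hb x₀ (half_pos hε)
  refine ⟨min δ₁ δ₂, lt_min hδ₁ hδ₂, fun {z} hz => ?_⟩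
  have hz1 : dist z x₀ ≤ δ₁ := le_trans hz.le (min_le_left _ _)
  have hz2 : dist z x₀ ≤ δ₂ := le_trans hz.le (min_le_right _ _)
  rw [Real.dist_eq, abs_sub_lt_iff]
  constructor
  · linarith [h1 z hz1]
  · linarith [h2 z hz2]

end ExitTime3

section RunMax

noncomputable def clamp (s : ℝ) : ℝ := max 0 (min s 1)

lemma clamp_mem_Icc (s : ℝ) : clamp s ∈ Set.Icc (0:ℝ) 1 :=
  ⟨le_max_left _ _, max_le zero_le_one (min_le_right _ _)⟩

lemma clamp_eq_of_mem {s : ℝ} (hs : s ∈ Set.Icc (0:ℝ) 1) : clamp s = s := by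
  unfold clamp
  rw [min_eq_left hs.2, max_eq_right hs.1]

lemma clamp_lipschitz (s s' : ℝ) : |clamp s - clamp s'| ≤ |s - s'| := by
  unfold clamp
  calc |max 0 (min s 1) - max 0 (min s' 1)|
      ≤ max |(0:ℝ) - 0| |min s 1 - min s' 1| := abs_max_sub_max_le_max _ _ _ _
    _ ≤ max |(0:ℝ) - 0| (max |s - s'| |(1:ℝ) - 1|) :=
        max_le_max le_rfl (abs_min_sub_min_le_max _ _ _ _)
    _ ≤ |s - s'| := by
        simp only [sub_self, abs_zero]
        exact max_le (abs_nonneg _) (max_le le_rfl (abs_nonneg _))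

lemma rm_bddAbove (y : C(unitI, ℝ)) (t : ℝ) : BddAbove (ev y '' Set.Icc 0 t) :=
  (isCompact_Icc.image (ev_continuous y)).bddAbove

lemma rm_nonempty (y : C(unitI, ℝ)) {t : ℝ} (ht : 0 ≤ t) : (ev y '' Set.Icc 0 t).Nonempty :=
  ⟨ev y 0, mem_image_of_mem _ (left_mem_Icc.2 ht)⟩

lemma rm_le_rm_add_dist (y z : C(unitI, ℝ)) {t : ℝ} (ht : 0 ≤ t) :
    runMax (ev y) t ≤ runMax (ev z) t + dist y z := by
  apply csSup_le (rm_nonempty y ht)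
  rintro v ⟨s, hs, rfl⟩
  have h1 := (abs_le.1 (ev_dist_le y z s)).2
  have h2 : ev z s ≤ runMax (ev z) t := le_csSup (rm_bddAbove z t) (mem_image_of_mem _ hs)
  unfold runMax at h2 ⊢
  linarith

lemma rm_dist_le (y z : C(unitI, ℝ)) {t : ℝ} (ht : 0 ≤ t) :
    |runMax (ev y) t - runMax (ev z) t| ≤ dist y z := by
  rw [abs_sub_le_iff]
  constructor
  · linarith [rm_le_rm_add_dist y z ht]
  · rw [dist_comm]
    linarith [rm_le_rm_add_dist z y ht]

lemma rm_mono (y : C(unitI, ℝ)) {t t' : ℝ} (ht : 0 ≤ t) (h : t ≤ t') :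
    runMax (ev y) t ≤ runMax (ev y) t' :=
  csSup_le_csSup (rm_bddAbove y t') (rm_nonempty y ht)
    (image_mono (Icc_subset_Icc le_rfl h))

lemma rm_time_cont (y : C(unitI, ℝ)) {ε : ℝ} (hε : 0 < ε) :
    ∃ δ > 0, ∀ t t' : ℝ, 0 ≤ t → 0 ≤ t' → |t - t'| ≤ δ →
      |runMax (ev y) t - runMax (ev y) t'| ≤ ε := by
  have huc : UniformContinuous (ev y) := by
    have h1 : UniformContinuous (fun s : ℝ => Set.projIcc (0:ℝ) 1 zero_le_one s) :=
      LipschitzWith.uniformContinuous (LipschitzWith.projIcc _)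
    exact (CompactSpace.uniformContinuous_of_continuous y.continuous).comp h1
  obtain ⟨δ, hδ, hmod⟩ := Metric.uniformContinuous_iff.1 huc ε hε
  refine ⟨δ/2, by linarith, ?_⟩
  have key : ∀ t t' : ℝ, 0 ≤ t' → t' ≤ t → t - t' ≤ δ/2 →
      runMax (ev y) t ≤ runMax (ev y) t' + ε := by
    intro t t' ht' htt' hd
    apply csSup_le (rm_nonempty y (le_trans ht' htt'))
    rintro v ⟨s, hs, rfl⟩
    rcases le_or_gt s t' with hst' | hst'
    · have h2 : ev y s ≤ runMax (ev y) t' :=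
        le_csSup (rm_bddAbove y t') (mem_image_of_mem _ ⟨hs.1, hst'⟩)
      unfold runMax at h2 ⊢
      linarith
    · have hds : dist s t' < δ := by
        rw [Real.dist_eq, abs_of_pos (by linarith)]
        linarith [hs.2]
      have h4 : ev y s - ev y t' < ε := by
        have := hmod hds
        rw [Real.dist_eq] at this
        linarith [le_abs_self (ev y s - ev y t')]
      have h5 : ev y t' ≤ runMax (ev y) t' :=
        le_csSup (rm_bddAbove y t') (mem_image_of_mem _ (right_mem_Icc.2 ht'))
      unfold runMax at h5 ⊢
      linarith
  intro t t' ht ht' hd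
  rcases le_total t' t with h | h
  · rw [abs_sub_le_iff]
    have h1 := key t t' ht' h (by linarith [(abs_le.1 hd).2])
    have h2 := rm_mono y ht' h
    constructor <;> linarith
  · rw [abs_sub_le_iff]
    have h1 := key t' t ht h (by linarith [(abs_le.1 hd).1])
    have h2 := rm_mono y ht h
    constructor <;> linarith

end RunMax

section Joint

lemma Gev_continuous : Continuous (fun p : C(unitI, ℝ) × ℝ => ev p.1 p.2) := by
  rw [continuous_iff_continuousAt]
  rintro ⟨y₀, s₀⟩
  rw [Metric.continuousAt_iff]
  intro ε hε
  obtain ⟨δ₁, hδ₁, hc⟩ := Metric.continuousAt_iff.1 ((ev_continuous y₀).continuousAt (x := s₀))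
    (ε/2) (half_pos hε)
  refine ⟨min δ₁ (ε/2), lt_min hδ₁ (half_pos hε), ?_⟩
  rintro ⟨y, s⟩ hp
  rw [Prod.dist_eq] at hp
  have hy : dist y y₀ < ε/2 := lt_of_le_of_lt (le_max_left _ _) (lt_of_lt_of_le hp (min_le_right _ _))
  have hs : dist s s₀ < δ₁ := lt_of_le_of_lt (le_max_right _ _) (lt_of_lt_of_le hp (min_le_left _ _))
  have h1 := ev_dist_le y y₀ s
  have h2 := hc hs
  rw [Real.dist_eq] at h2 ⊢
  calc |ev y s - ev y₀ s₀| ≤ |ev y s - ev y₀ s| + |ev y₀ s - ev y₀ s₀| := abs_sub_le _ _ _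
    _ < ε/2 + ε/2 := by
        apply add_lt_add_of_le_of_lt (le_trans h1 _) h2
        rw [← Real.dist_eq] at *
        exact hy.le
    _ = ε := by ring

lemma Grm_continuous : Continuous (fun p : C(unitI, ℝ) × ℝ => runMax (ev p.1) (clamp p.2)) := by
  rw [continuous_iff_continuousAt]
  rintro ⟨y₀, s₀⟩
  rw [Metric.continuousAt_iff]
  intro ε hε
  obtain ⟨δ₁, hδ₁, hc⟩ := rm_time_cont y₀ (half_pos hε)
  refine ⟨min δ₁ (ε/2), lt_min hδ₁ (half_pos hε), ?_⟩
  rintro ⟨y, s⟩ hp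
  rw [Prod.dist_eq] at hp
  have hy : dist y y₀ < ε/2 :=
    lt_of_le_of_lt (le_max_left _ _) (lt_of_lt_of_le hp (min_le_right _ _))
  have hs : dist s s₀ < δ₁ :=
    lt_of_le_of_lt (le_max_right _ _) (lt_of_lt_of_le hp (min_le_left _ _))
  have hcl : |clamp s - clamp s₀| ≤ δ₁ := by
    have := clamp_lipschitz s s₀
    rw [Real.dist_eq] at hs
    linarith
  have h1 := rm_dist_le y y₀ (t := clamp s) (clamp_mem_Icc s).1
  have h2 := hc (clamp s) (clamp s₀) (clamp_mem_Icc s).1 (clamp_mem_Icc s₀).1 hcl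
  rw [Real.dist_eq]
  calc |runMax (ev y) (clamp s) - runMax (ev y₀) (clamp s₀)|
      ≤ |runMax (ev y) (clamp s) - runMax (ev y₀) (clamp s)|
        + |runMax (ev y₀) (clamp s) - runMax (ev y₀) (clamp s₀)| := abs_sub_le _ _ _
    _ < ε/2 + ε/2 := add_lt_add_of_lt_of_le (lt_of_le_of_lt h1 hy) h2
    _ = ε := by ring

end Joint

section Comp

variable [MeasurableSpace C(unitI, ℝ)] [BorelSpace C(unitI, ℝ)]

lemma ev_comp_continuousAt {x₀ : C(unitI, ℝ)} {c : C(unitI, ℝ) → ℝ}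
    (hc : ContinuousAt c x₀) : ContinuousAt (fun y => ev y (c y)) x₀ := by
  have heq : (fun y : C(unitI, ℝ) => ev y (c y))
      = (fun p : C(unitI, ℝ) × ℝ => ev p.1 p.2) ∘ (fun y => (y, c y)) := rfl
  rw [heq]
  exact (Gev_continuous.continuousAt).comp (continuousAt_id.prodMk hc)

lemma rm_comp_continuousAt {x₀ : C(unitI, ℝ)} {c : C(unitI, ℝ) → ℝ}
    (hc : ContinuousAt c x₀) (hrange : ∀ y, c y ∈ Set.Icc (0:ℝ) 1) :
    ContinuousAt (fun y => runMax (ev y) (c y)) x₀ := by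
  have heq : (fun y : C(unitI, ℝ) => runMax (ev y) (c y))
      = (fun p : C(unitI, ℝ) × ℝ => runMax (ev p.1) (clamp p.2)) ∘ (fun y => (y, c y)) := by
    funext y
    simp only [Function.comp_apply]
    rw [clamp_eq_of_mem (hrange y)]
  rw [heq]
  exact (Grm_continuous.continuousAt).comp (continuousAt_id.prodMk hc)

lemma ev_comp_measurable {c : C(unitI, ℝ) → ℝ} (hc : Measurable c) :
    Measurable (fun y => ev y (c y)) :=
  (Gev_continuous.measurable).comp (measurable_id.prodMk hc)

lemma rm_comp_measurable {c : C(unitI, ℝ) → ℝ} (hc : Measurable c)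
    (hrange : ∀ y, c y ∈ Set.Icc (0:ℝ) 1) :
    Measurable (fun y => runMax (ev y) (c y)) := by
  have heq : (fun y : C(unitI, ℝ) => runMax (ev y) (c y))
      = (fun p : C(unitI, ℝ) × ℝ => runMax (ev p.1) (clamp p.2)) ∘ (fun y => (y, c y)) := by
    funext y
    simp only [Function.comp_apply]
    rw [clamp_eq_of_mem (hrange y)]
  rw [heq]
  exact (Grm_continuous.measurable).comp (measurable_id.prodMk hc)

end Comp

theorem Vh_tendsto_V
    {Ω : Type*} [MeasurableSpace Ω] (P : Measure Ω) [IsProbabilityMeasure P]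
    [MeasurableSpace C(unitI, ℝ)] [BorelSpace C(unitI, ℝ)]
    (m : ℕ) (ν1 ν2 ν3 ν4 : Fin m → ℝ)
    (hν : ∀ i, ν1 i ∈ Set.Icc (0:ℝ) 1 ∧ ν2 i ∈ Set.Icc (0:ℝ) 1 ∧
      ν3 i ∈ Set.Icc (0:ℝ) 1 ∧ ν4 i ∈ Set.Icc (0:ℝ) 1)
    (a b : ℝ → ℝ)
    (ha : ContinuousOn a (Set.Icc 0 1)) (hb : ContinuousOn b (Set.Icc 0 1))
    (hab : ∀ t ∈ Set.Icc (0:ℝ) 1, a t < b t)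
    (X : Ω → C(unitI, ℝ)) (hXmeas : Measurable X)
    (Xh : ℝ → Ω → C(unitI, ℝ)) (hXhmeas : ∀ h ∈ Set.Ioi (0:ℝ), Measurable (Xh h))
    -- weak convergence of the laws of `X^h` to the law of `X` as `h → 0⁺`:
    (hweak : ∀ F : C(unitI, ℝ) → ℝ, Continuous F → (∃ M : ℝ, ∀ z, |F z| ≤ M) →
      Filter.Tendsto (fun h => ∫ ω, F (Xh h ω) ∂P)
        (nhdsWithin 0 (Set.Ioi 0)) (nhds (∫ ω, F (X ω) ∂P)))
    -- (i) a.s. the initial value lies strictly between the barriers: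
    (hinit : ∀ᵐ ω ∂P, a 0 < ev (X ω) 0 ∧ ev (X ω) 0 < b 0)
    -- (ii) a.s. boundary regularity `inf{ t > τ : X(t) ∉ [α(t), β(t)] } ∧ 1 = τ`:
    (hreg : ∀ᵐ ω ∂P,
      sInf ({t | exitTime a b (ev (X ω)) < t ∧ t ≤ 1 ∧
          (ev (X ω) t < a t ∨ b t < ev (X ω) t)} ∪ {1})
        = exitTime a b (ev (X ω)))
    -- (iii) `g` bounded, Borel measurable, a.s. continuous at `Z`:
    (g : (Fin m → ℝ) × (Fin m → ℝ) × (Fin m → ℝ) × (Fin m → ℝ) × ℝ → ℝ)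
    (hgmeas : Measurable g) (hgbdd : ∃ M : ℝ, ∀ z, |g z| ≤ M)
    (hgcont : P {ω | ¬ ContinuousAt g (argZ m a b ν1 ν2 ν3 ν4 (ev (X ω)))} = 0) :
    Filter.Tendsto
      (fun h => ∫ ω, g (argZ m a b ν1 ν2 ν3 ν4 (ev (Xh h ω))) ∂P)
      (nhdsWithin 0 (Set.Ioi 0))
      (nhds (∫ ω, g (argZ m a b ν1 ν2 ν3 ν4 (ev (X ω))) ∂P)) := by
  classical
  obtain ⟨M, hM⟩ := hgbdd
  set Φ : C(unitI, ℝ) → (Fin m → ℝ) × (Fin m → ℝ) × (Fin m → ℝ) × (Fin m → ℝ) × ℝ :=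
    fun y => argZ m a b ν1 ν2 ν3 ν4 (ev y) with hΦ
  set φ : C(unitI, ℝ) → ℝ := fun y => g (Φ y) with hφ
  have hφb : ∀ y, |φ y| ≤ M := fun y => hM _
  have hτmeas : Measurable (fun y : C(unitI, ℝ) => exitTime a b (ev y)) :=
    exitTime_measurable ha hb
  have hτIcc : ∀ y : C(unitI, ℝ), exitTime a b (ev y) ∈ Set.Icc (0:ℝ) 1 := fun y =>
    exitTime_mem_Icc (a := a) (b := b) (ev y)
  have hr1 : ∀ (y : C(unitI, ℝ)) (i : Fin m), exitTime a b (ev y) * ν3 i ∈ Set.Icc (0:ℝ) 1 := by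
    intro y i
    obtain ⟨h1, h2⟩ := hτIcc y
    obtain ⟨h3, h4⟩ := (hν i).2.2.1
    exact ⟨mul_nonneg h1 h3, mul_le_one₀ h2 h3 h4⟩
  have hΦmeas : Measurable Φ := by
    rw [hΦ]
    unfold argZ proj
    apply Measurable.prodMk
    · exact measurable_pi_lambda _ (fun i => ev_comp_measurable (hτmeas.mul_const _))
    apply Measurable.prodMk
    · exact measurable_pi_lambda _ (fun i => ev_comp_measurable measurable_const)
    apply Measurable.prodMk
    · exact measurable_pi_lambda _
        (fun i => rm_comp_measurable (hτmeas.mul_const _) (fun y => hr1 y i))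
    apply Measurable.prodMk
    · exact measurable_pi_lambda _
        (fun i => rm_comp_measurable measurable_const (fun y => (hν i).2.2.2))
    · exact hτmeas
  have hφmeas : Measurable φ := hgmeas.comp hΦmeas
  -- almost sure continuity of `φ` at `X ω`
  have haeCont : ∀ᵐ ω ∂P, ContinuousAt φ (X ω) := by
    have h1 : ∀ᵐ ω ∂P, ContinuousAt g (Φ (X ω)) := by
      rw [ae_iff]
      exact hgcont
    filter_upwards [h1, hreg] with ω hgc hr
    have hτc : ContinuousAt (fun y : C(unitI, ℝ) => exitTime a b (ev y)) (X ω) :=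
      exitTime_continuousAt ha hb (X ω) hr
    have hΦc : ContinuousAt Φ (X ω) := by
      rw [hΦ]
      unfold argZ proj
      apply ContinuousAt.prodMk
      · exact continuousAt_pi.2 (fun i => ev_comp_continuousAt (hτc.mul continuousAt_const))
      apply ContinuousAt.prodMk
      · exact continuousAt_pi.2 (fun i => ev_comp_continuousAt continuousAt_const)
      apply ContinuousAt.prodMk
      · exact continuousAt_pi.2
          (fun i => rm_comp_continuousAt (hτc.mul continuousAt_const) (fun y => hr1 y i))
      apply ContinuousAt.prodMk
      · exact continuousAt_pi.2
          (fun i => rm_comp_continuousAt continuousAt_const (fun y => (hν i).2.2.2))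
      · exact hτc
    exact hgc.comp hΦc
  -- reduce to sequences
  haveI : IsProbabilityMeasure (P.map X) := Measure.isProbabilityMeasure_map hXmeas.aemeasurable
  rw [Filter.tendsto_iff_seq_tendsto]
  intro u hu
  have hu0 : ∀ᶠ n in atTop, 0 < u n := (tendsto_nhdsWithin_iff.1 hu).2
  set μ : ProbabilityMeasure C(unitI, ℝ) := ⟨P.map X, inferInstance⟩ with hμ
  set μs : ℕ → ProbabilityMeasure C(unitI, ℝ) := fun n =>
    if h : 0 < u n then ⟨P.map (Xh (u n)), Measure.isProbabilityMeasure_map (hXhmeas _ h).aemeasurable⟩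
    else μ with hμs
  have hμcoe : (μ : Measure C(unitI, ℝ)) = P.map X := rfl
  have hμscoe : ∀ n, 0 < u n → (μs n : Measure C(unitI, ℝ)) = P.map (Xh (u n)) := by
    intro n hn
    simp only [hμs]
    exact congrArg (fun μ : ProbabilityMeasure C(unitI, ℝ) => (μ : Measure C(unitI, ℝ))) (dif_pos hn)
  have hmapint : ∀ (ψ : C(unitI, ℝ) → ℝ), Measurable ψ →
      ∫ x, ψ x ∂(μ : Measure C(unitI, ℝ)) = ∫ ω, ψ (X ω) ∂P := by
    intro ψ hψ
    rw [hμcoe]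
    exact integral_map hXmeas.aemeasurable hψ.aestronglyMeasurable
  have hmapint' : ∀ n, 0 < u n → ∀ (ψ : C(unitI, ℝ) → ℝ), Measurable ψ →
      ∫ x, ψ x ∂(μs n : Measure C(unitI, ℝ)) = ∫ ω, ψ (Xh (u n) ω) ∂P := by
    intro n hn ψ hψ
    rw [hμscoe n hn]
    exact integral_map (hXhmeas _ hn).aemeasurable hψ.aestronglyMeasurable
  have hb' : ∀ z, |φ z| ≤ |M| := fun z => (hφb z).trans (le_abs_self M)
  have key := seq_mapping (M := M) μ μs ?_ hφmeas hφb ?_ ?_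
  · -- conclude
    have hlim : (∫ x, φ x ∂(μ : Measure C(unitI, ℝ)))
        = ∫ ω, g (argZ m a b ν1 ν2 ν3 ν4 (ev (X ω))) ∂P := hmapint φ hφmeas
    rw [← hlim]
    apply Filter.Tendsto.congr' _ key
    filter_upwards [hu0] with n hn
    exact hmapint' n hn φ hφmeas
  · -- weak convergence along the sequence
    intro F hF hFb
    have hFm : Measurable F := hF.measurable
    have h := (hweak F hF hFb).comp hu
    rw [hmapint F hFm]
    apply Filter.Tendsto.congr' _ h
    filter_upwards [hu0] with n hn
    exact (hmapint' n hn F hFm).symm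
  · -- envelope congruence for φ
    rw [hmapint _ (uEnv_measurable hb'), hmapint _ hφmeas]
    apply integral_congr_ae
    filter_upwards [haeCont] with ω hc
    exact uEnv_eq_of_continuousAt hb' hc
  · -- envelope congruence for -φ
    have hb'' : ∀ z, |(fun x => -φ x) z| ≤ |M| := fun z => by simpa using hb' z
    rw [hmapint _ (uEnv_measurable hb''), hmapint (fun x => -φ x) hφmeas.neg]
    apply integral_congr_ae
    filter_upwards [haeCont] with ω hc
    exact uEnv_eq_of_continuousAt hb'' hc.neg
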